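/- Let {S(t)}_{t≥0} be a semiflow on a complete metric space X possessing a compact attracting set K (i.e. dist(S(t)B, K) → 0 as t → ∞ for every bounded B ⊂ X). Then the ω-limit set ω(K) = ∩_{t≥0} closure(∪_{s≥t} S(s)K) is nonempty, compact, invariant (S(t)ω(K) = ω(K) for all t ≥ 0), and attracts every bounded set; i.e., it is the global attractor of the semiflow. -/

import Mathlib

open Filter Topology Bornology Metric

section Aux
variable {X : Type*} [MetricSpace X]

lemma aux_extract {K : Set X} (hK : IsCompact K) (hKne : K.Nonempty)
    (z : ℕ → X) (hz : Tendsto (fun n => infDist (z n) K) atTop (𝓝 0)) :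
    ∃ b ∈ K, ∃ φ : ℕ → ℕ, StrictMono φ ∧ Tendsto (z ∘ φ) atTop (𝓝 b) := by
  have hy : ∀ n : ℕ, ∃ y ∈ K, dist (z n) y = infDist (z n) K := fun n =>
    hK.exists_infDist_eq_dist hKne (z n) |>.imp fun y ⟨h1, h2⟩ => ⟨h1, h2.symm⟩
  choose y hyK hyd using hy
  obtain ⟨b, hbK, φ, hφ, hyb⟩ := hK.tendsto_subseq hyK
  refine ⟨b, hbK, φ, hφ, ?_⟩
  rw [tendsto_iff_dist_tendsto_zero]
  have h1 : ∀ n, dist ((z ∘ φ) n) b ≤ infDist (z (φ n)) K + dist (y (φ n)) b := by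
    intro n
    calc dist (z (φ n)) b ≤ dist (z (φ n)) (y (φ n)) + dist (y (φ n)) b := dist_triangle _ _ _
    _ = _ := by rw [hyd]
  have h2 : Tendsto (fun n => infDist (z (φ n)) K + dist (y (φ n)) b) atTop (𝓝 0) := by
    have := (hz.comp (hφ.tendsto_atTop)).add ((tendsto_iff_dist_tendsto_zero.1 hyb))
    simpa using this
  exact squeeze_zero (fun n => dist_nonneg) h1 h2

variable (S : ℝ → X → X) (K : Set X)

lemma aux_cont (hScont : ContinuousOn (fun p : ℝ × X => S p.1 p.2) (Set.Ici 0 ×ˢ Set.univ))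
    (t : ℝ) (ht : 0 ≤ t) : Continuous (fun x => S t x) := by
  have : Continuous ((fun p : ℝ × X => S p.1 p.2) ∘ (fun x => (t, x))) :=
    hScont.comp_continuous (continuous_const.prodMk continuous_id)
      (fun x => ⟨ht, trivial⟩)
  exact this

lemma aux_infDist
    (hattr : ∀ B : Set X, IsBounded B → ∀ ε > 0, ∃ T : ℝ, ∀ t ≥ T, ∀ x ∈ B,
      ∃ y ∈ K, dist (S t x) y ≤ ε)
    (B : Set X) (hB : IsBounded B) (t : ℕ → ℝ) (ht : Tendsto t atTop atTop)
    (x : ℕ → X) (hx : ∀ n, x n ∈ B) :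
    Tendsto (fun n => infDist (S (t n) (x n)) K) atTop (𝓝 0) := by
  rw [Metric.tendsto_atTop]
  intro ε hε
  obtain ⟨T, hT⟩ := hattr B hB (ε / 2) (by positivity)
  obtain ⟨N, hN⟩ := (ht.eventually_ge_atTop T).exists_forall_of_atTop
  refine ⟨N, fun n hn => ?_⟩
  obtain ⟨y, hyK, hyd⟩ := hT (t n) (hN n hn) (x n) (hx n)
  have h1 : infDist (S (t n) (x n)) K ≤ ε / 2 := le_trans (infDist_le_dist_of_mem hyK) hyd
  have h2 : (0:ℝ) ≤ infDist (S (t n) (x n)) K := infDist_nonneg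
  rw [Real.dist_eq]
  rw [abs_of_nonneg (by linarith)]
  linarith

lemma aux_memA
    (hSadd : ∀ t s : ℝ, 0 ≤ t → 0 ≤ s → ∀ x, S (t + s) x = S t (S s x))
    (hScont : ContinuousOn (fun p : ℝ × X => S p.1 p.2) (Set.Ici 0 ×ˢ Set.univ))
    (hK : IsCompact K) (hKne : K.Nonempty)
    (hattr : ∀ B : Set X, IsBounded B → ∀ ε > 0, ∃ T : ℝ, ∀ t ≥ T, ∀ x ∈ B,
      ∃ y ∈ K, dist (S t x) y ≤ ε)
    (B : Set X) (hB : IsBounded B)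
    (t : ℕ → ℝ) (ht : Tendsto t atTop atTop) (x : ℕ → X) (hx : ∀ n, x n ∈ B)
    (b : X) (hb : Tendsto (fun n => S (t n) (x n)) atTop (𝓝 b)) :
    ∀ r ≥ (0:ℝ), b ∈ closure (⋃ s ∈ Set.Ici r, S s '' K) := by
  intro r hr
  set w : ℕ → X := fun n => S (t n - r) (x n) with hw
  have htr : Tendsto (fun n => t n - r) atTop atTop := tendsto_atTop_add_const_right _ _ ht
  have hinf : Tendsto (fun n => infDist (w n) K) atTop (𝓝 0) :=
    aux_infDist S K hattr B hB _ htr x hx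
  obtain ⟨winf, hwinfK, ψ, hψ, hwlim⟩ := aux_extract hK hKne w hinf
  have hcont := aux_cont S hScont r hr
  have hSr : Tendsto (fun n => S r (w (ψ n))) atTop (𝓝 (S r winf)) :=
    (hcont.tendsto winf).comp hwlim
  have heq : ∀ᶠ n in atTop, S r (w (ψ n)) = S (t (ψ n)) (x (ψ n)) := by
    have h : ∀ᶠ n in atTop, r ≤ t (ψ n) := by
      have := (htr.comp hψ.tendsto_atTop).eventually_ge_atTop 0
      filter_upwards [this] with n hn
      simp only [Function.comp_apply] at hn; linarith
    filter_upwards [h] with n hn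
    have := hSadd r (t (ψ n) - r) hr (by linarith) (x (ψ n))
    rw [← this, add_sub_cancel]
  have hb' : Tendsto (fun n => S (t (ψ n)) (x (ψ n))) atTop (𝓝 b) :=
    hb.comp hψ.tendsto_atTop
  have : S r winf = b := tendsto_nhds_unique (hSr.congr' heq) hb'
  refine subset_closure ?_
  rw [← this]
  exact Set.mem_biUnion (Set.mem_Ici.2 le_rfl) ⟨winf, hwinfK, rfl⟩

end Aux



/-- A semiflow on a complete metric space possessing a compact attracting set `K`
has a global attractor, namely the ω-limit set
`ω(K) = ⋂_{t ≥ 0} closure(⋃_{s ≥ t} S(s)K)`: it is nonempty, compact, invariant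
and attracts every bounded set. -/
theorem global_attractor_of_compact_attracting_set
    {X : Type*} [MetricSpace X] [CompleteSpace X] [Nonempty X]
    (S : ℝ → X → X)
    (hS0 : ∀ x, S 0 x = x)
    (hSadd : ∀ t s : ℝ, 0 ≤ t → 0 ≤ s → ∀ x, S (t + s) x = S t (S s x))
    (hScont : ContinuousOn (fun p : ℝ × X => S p.1 p.2) (Set.Ici 0 ×ˢ Set.univ))
    (K : Set X) (hK : IsCompact K)
    (hattr : ∀ B : Set X, IsBounded B → ∀ ε > 0, ∃ T : ℝ, ∀ t ≥ T, ∀ x ∈ B,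
      ∃ y ∈ K, dist (S t x) y ≤ ε) :
    ∀ A : Set X, A = ⋂ t ∈ Set.Ici (0 : ℝ), closure (⋃ s ∈ Set.Ici t, S s '' K) →
      A.Nonempty ∧ IsCompact A ∧ (∀ t ≥ (0 : ℝ), S t '' A = A) ∧
        (∀ B : Set X, IsBounded B → ∀ ε > 0, ∃ T : ℝ, ∀ t ≥ T, ∀ x ∈ B,
          ∃ y ∈ A, dist (S t x) y ≤ ε) := by
  intro A hA
  have hKne : K.Nonempty := by
    obtain ⟨T, hT⟩ := hattr {Classical.arbitrary X} isBounded_singleton 1 one_pos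
    obtain ⟨y, hyK, -⟩ := hT T le_rfl _ rfl
    exact ⟨y, hyK⟩
  have hmemA : ∀ a : X, a ∈ A ↔ ∀ r ≥ (0:ℝ), a ∈ closure (⋃ s ∈ Set.Ici r, S s '' K) := by
    intro a; rw [hA]; simp [Set.mem_iInter₂, Set.mem_Ici]
  -- A is nonempty
  have hne : A.Nonempty := by
    obtain ⟨x₀, hx₀⟩ := id hKne
    have hnat : Tendsto (fun n : ℕ => (n:ℝ)) atTop atTop := tendsto_natCast_atTop_atTop
    have hinf := aux_infDist S K hattr K hK.isBounded _ hnat (fun _ => x₀) (fun _ => hx₀)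
    obtain ⟨b, -, φ, hφ, hb⟩ := aux_extract hK hKne _ hinf
    refine ⟨b, (hmemA b).2 (aux_memA S K hSadd hScont hK hKne hattr K hK.isBounded
      (fun n => ((φ n : ℕ) : ℝ)) (hnat.comp hφ.tendsto_atTop) (fun _ => x₀) (fun _ => hx₀) b hb)⟩
  -- A ⊆ K
  have hAK : A ⊆ K := by
    intro a ha
    rw [hK.isClosed.mem_iff_infDist_zero hKne]
    have hle : ∀ ε > (0:ℝ), infDist a K ≤ ε := by
      intro ε hε
      obtain ⟨T, hT⟩ := hattr K hK.isBounded ε hε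
      have haΩ := (hmemA a).1 ha (max T 0) (le_max_right _ _)
      have hsub : closure (⋃ s ∈ Set.Ici (max T 0), S s '' K) ⊆ {x | infDist x K ≤ ε} := by
        refine closure_minimal ?_ (isClosed_le (continuous_infDist_pt K) continuous_const)
        rintro x hx
        simp only [Set.mem_iUnion, Set.mem_image, Set.mem_Ici] at hx
        obtain ⟨s, hs, y, hyK, rfl⟩ := hx
        obtain ⟨y', hy'K, hy'⟩ := hT s (le_trans (le_max_left _ _) hs) y hyK
        exact le_trans (infDist_le_dist_of_mem hy'K) hy'
      exact hsub haΩ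
    have h0 : 0 ≤ infDist a K := infDist_nonneg
    by_contra h
    obtain ⟨ε, hε1, hε2⟩ := exists_between (lt_of_le_of_ne h0 (Ne.symm h))
    exact absurd (hle ε hε1) (not_le.2 hε2)
  -- A is closed and compact
  have hclosed : IsClosed A := by
    rw [hA]; exact isClosed_biInter (fun _ _ => isClosed_closure)
  have hcomp : IsCompact A := hK.of_isClosed_subset hclosed hAK
  -- forward invariance
  have hfwd : ∀ t ≥ (0:ℝ), S t '' A ⊆ A := by
    intro t ht z hz
    obtain ⟨a, haA, rfl⟩ := hz
    rw [hmemA]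
    intro r hr
    have haΩ := (hmemA a).1 haA r hr
    have hc := aux_cont S hScont t ht
    have h1 : S t a ∈ closure (S t '' (⋃ s ∈ Set.Ici r, S s '' K)) :=
      image_closure_subset_closure_image hc ⟨a, haΩ, rfl⟩
    refine closure_mono ?_ h1
    rintro z ⟨w, hw, rfl⟩
    simp only [Set.mem_iUnion, Set.mem_image, Set.mem_Ici] at hw ⊢
    obtain ⟨s, hs, y, hyK, rfl⟩ := hw
    exact ⟨t + s, by linarith, y, hyK, hSadd t s ht (le_trans hr hs) y⟩
  -- backward invariance
  have hbwd : ∀ t ≥ (0:ℝ), A ⊆ S t '' A := by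
    intro t ht a haA
    have hsel : ∀ n : ℕ, ∃ u, (∃ s, (t + n ≤ s) ∧ ∃ x ∈ K, S s x = u)
        ∧ dist a u < 1/(n+1) := by
      intro n
      have h := (hmemA a).1 haA (t + n) (by positivity)
      rw [Metric.mem_closure_iff] at h
      obtain ⟨u, hu, hud⟩ := h (1/(n+1)) (by positivity)
      simp only [Set.mem_iUnion, Set.mem_image, Set.mem_Ici] at hu
      obtain ⟨s, hs, x, hxK, rfl⟩ := hu
      exact ⟨_, ⟨s, hs, x, hxK, rfl⟩, hud⟩
    choose u hu hud using hsel
    choose s hs x hxK hSx using hu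
    have hst : ∀ n : ℕ, (n:ℝ) ≤ s n - t := fun n => by have := hs n; linarith
    have hτ : Tendsto (fun n : ℕ => s n - t) atTop atTop :=
      tendsto_atTop_mono hst tendsto_natCast_atTop_atTop
    have hinf := aux_infDist S K hattr K hK.isBounded _ hτ x hxK
    obtain ⟨b, hbK, φ, hφ, hblim⟩ := aux_extract hK hKne _ hinf
    have hua : Tendsto (fun n => u (φ n)) atTop (𝓝 a) := by
      have h1 : Tendsto u atTop (𝓝 a) := by
        rw [tendsto_iff_dist_tendsto_zero]
        refine squeeze_zero (g := fun n : ℕ => 1/(n+1)) (fun n => dist_nonneg)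
          (fun n => le_of_lt (by rw [dist_comm]; exact hud n))
          tendsto_one_div_add_atTop_nhds_zero_nat
      exact h1.comp hφ.tendsto_atTop
    have hSz : ∀ n, S t (S (s n - t) (x n)) = u n := by
      intro n
      rw [← hSadd t (s n - t) ht (le_trans (Nat.cast_nonneg n) (hst n)) (x n),
        add_sub_cancel, hSx]
    have hStb : Tendsto (fun n => S t (S (s (φ n) - t) (x (φ n)))) atTop (𝓝 (S t b)) :=
      ((aux_cont S hScont t ht).tendsto b).comp hblim
    have heq : S t b = a :=
      tendsto_nhds_unique (hStb.congr (fun n => hSz (φ n))) hua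
    have hbA : b ∈ A := (hmemA b).2
      (aux_memA S K hSadd hScont hK hKne hattr K hK.isBounded
        (fun n => s (φ n) - t) (hτ.comp hφ.tendsto_atTop) (fun n => x (φ n))
        (fun n => hxK (φ n)) b hblim)
    exact ⟨b, hbA, heq⟩
  refine ⟨hne, hcomp, fun t ht => le_antisymm (hfwd t ht) (hbwd t ht), ?_⟩
  -- attraction
  intro B hB ε hε
  by_contra hcon
  push_neg at hcon
  have hsel : ∀ n : ℕ, ∃ t ≥ (n:ℝ), ∃ x ∈ B, ∀ y ∈ A, ε < dist (S t x) y := by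
    intro n
    obtain ⟨t, htn, x, hx, hy⟩ := hcon n
    exact ⟨t, htn, x, hx, fun y hyA => hy y hyA⟩
  choose t ht x hx hfar using hsel
  have htt : Tendsto t atTop atTop := tendsto_atTop_mono ht tendsto_natCast_atTop_atTop
  have hinf := aux_infDist S K hattr B hB t htt x hx
  obtain ⟨b, hbK, φ, hφ, hblim⟩ := aux_extract hK hKne _ hinf
  have hbA : b ∈ A := (hmemA b).2
    (aux_memA S K hSadd hScont hK hKne hattr B hB (fun n => t (φ n))
      (htt.comp hφ.tendsto_atTop) (fun n => x (φ n)) (fun n => hx (φ n)) b hblim)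
  obtain ⟨N, hN⟩ := (Metric.tendsto_atTop.1 hblim) ε hε
  exact absurd (hN N le_rfl) (not_lt.2 (le_of_lt (hfar (φ N) b hbA)))
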